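/- For all positive integers m and n and every positive integer k, if A ⊆ L(m,n) is a union of k antichains of the poset L(m,n), then the cardinality of A is at most the sum of the k largest rank numbers of L(m,n), i.e., |A| ≤ max over k-element subsets S of {0,1,...,mn} of ∑_{s ∈ S} p_s, where p_s = #{λ ∈ L(m,n) : |λ| = s} (L(m,n) has the strong Sperner property). -/

import Mathlib

open scoped Classical

/-- The finite Young lattice `L(m,n)`, modeled as antitone functions
`Fin m → Fin (n+1)`, ordered pointwise. -/
def YoungL (m n : ℕ) := {f : Fin m → Fin (n + 1) // Antitone fun i => (f i : ℕ)}

noncomputable instance (m n : ℕ) : Fintype (YoungL m n) :=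
  Subtype.fintype _

instance (m n : ℕ) : PartialOrder (YoungL m n) :=
  Subtype.partialOrder _

/-- The number of partitions in `L(m,n)` of size `s`. -/
noncomputable def youngRankNum (m n s : ℕ) : ℕ :=
  (Finset.univ.filter fun f : YoungL m n => ∑ i, (f.1 i : ℕ) = s).card

section Abstract

variable {X : Type*} [Fintype X]

open Matrix in
lemma sl2_inj [DecidableEq X] (ρ : X → ℕ) (L : ℕ) (E F : Matrix X X ℚ)
    (hF : ∀ x y : X, F y x ≠ 0 → ρ x = ρ y + 1)
    (hC : E * F - F * E = Matrix.diagonal (fun x => 2 * (ρ x : ℚ) - L))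
    (s : ℕ) (hs : 2 * s < L)
    (v : X → ℚ) (hv : ∀ x, v x ≠ 0 → ρ x = s) (hEv : E.mulVec v = 0) : v = 0 := by
  by_contra hv0
  have hEF : ∀ w : X → ℚ, E.mulVec (F.mulVec w) =
      F.mulVec (E.mulVec w) + (Matrix.diagonal (fun x => 2 * (ρ x : ℚ) - L)).mulVec w := by
    intro w
    rw [Matrix.mulVec_mulVec, Matrix.mulVec_mulVec, ← Matrix.add_mulVec, ← hC,
      add_sub_cancel]
  -- support lemma
  have supp : ∀ t : ℕ, ∀ x : X, ((F ^ t).mulVec v) x ≠ 0 → ρ x + t = s := by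
    intro t
    induction t with
    | zero => intro x hx; simp only [pow_zero, Matrix.one_mulVec] at hx
              simpa using hv x hx
    | succ t ih =>
      intro x hx
      rw [pow_succ', ← Matrix.mulVec_mulVec] at hx
      rw [Matrix.mulVec, dotProduct] at hx
      obtain ⟨y, -, hy⟩ := Finset.exists_ne_zero_of_sum_ne_zero hx
      have h1 : F x y ≠ 0 := left_ne_zero_of_mul hy
      have h2 : ((F ^ t).mulVec v) y ≠ 0 := right_ne_zero_of_mul hy
      have e1 := hF y x h1
      have e2 := ih y h2
      omega
  -- diagonal action
  have diag : ∀ t : ℕ, (Matrix.diagonal (fun x => 2 * (ρ x : ℚ) - L)).mulVec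
      ((F ^ t).mulVec v) = (2 * (s : ℚ) - 2 * t - L) • ((F ^ t).mulVec v) := by
    intro t
    funext x
    rw [Matrix.mulVec_diagonal]
    by_cases h : ((F ^ t).mulVec v) x = 0
    · simp [h]
    · have := supp t x h
      have : (ρ x : ℚ) = (s : ℚ) - t := by
        have : (ρ x : ℚ) + t = s := by exact_mod_cast congrArg (Nat.cast : ℕ → ℚ) this
        linarith
      simp only [Pi.smul_apply, smul_eq_mul, this]
      ring
  -- key commutation identity
  have key : ∀ t : ℕ, E.mulVec ((F ^ (t + 1)).mulVec v) =
      (((t : ℚ) + 1) * (2 * s - L - t)) • ((F ^ t).mulVec v) := by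
    intro t
    induction t with
    | zero =>
      rw [pow_one]
      rw [hEF v, hEv, Matrix.mulVec_zero, zero_add]
      have d0 := diag 0
      simp only [pow_zero, Matrix.one_mulVec] at d0 ⊢
      rw [d0]
      congr 1
      ring
    | succ t ih =>
      have step : (F ^ (t + 2)).mulVec v = F.mulVec ((F ^ (t + 1)).mulVec v) := by
        rw [Matrix.mulVec_mulVec, ← pow_succ']
      rw [step, hEF, ih, Matrix.mulVec_smul, diag (t + 1)]
      rw [Matrix.mulVec_mulVec, ← pow_succ']
      rw [← add_smul]
      congr 1
      push_cast
      ring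
  -- nonvanishing
  have nz : ∀ t : ℕ, (F ^ t).mulVec v ≠ 0 := by
    intro t
    induction t with
    | zero => simpa [pow_zero, Matrix.one_mulVec] using hv0
    | succ t ih =>
      intro h0
      have := key t
      rw [h0, Matrix.mulVec_zero] at this
      have hc : ((t : ℚ) + 1) * (2 * s - L - t) ≠ 0 := by
        have h1 : (2 * (s : ℚ) : ℚ) < (L : ℚ) := by exact_mod_cast hs
        have ht : (0 : ℚ) ≤ (t : ℚ) := Nat.cast_nonneg t
        have h2 : (2 * (s : ℚ) - L - t) < 0 := by linarith
        exact mul_ne_zero (by positivity) (ne_of_lt h2)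
      exact ih ((smul_eq_zero.mp this.symm).resolve_left hc)
  -- finish
  have hzero : (F ^ (s + 1)).mulVec v = 0 := by
    funext x
    by_contra hx
    have := supp (s + 1) x hx
    omega
  exact nz (s + 1) hzero

end Abstract

section Hall

variable {X : Type*} [Fintype X] [DecidableEq X]

lemma matching_of_inj (T : Finset X) (M : Matrix X X ℚ)
    (hinj : ∀ v : X → ℚ, (∀ x, v x ≠ 0 → x ∈ T) → M.mulVec v = 0 → v = 0) :
    ∃ f : X → X, Set.InjOn f ↑T ∧ ∀ x ∈ T, M (f x) x ≠ 0 := by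
  classical
  set t : {x // x ∈ T} → Finset X :=
    fun x => Finset.univ.filter (fun y => M y x.1 ≠ 0) with ht
  have hall : ∀ s : Finset {x // x ∈ T}, s.card ≤ (s.biUnion t).card := by
    intro s
    by_contra hlt
    push_neg at hlt
    set W := s.biUnion t with hW
    set φ : ({x // x ∈ s} → ℚ) →ₗ[ℚ] ({y // y ∈ W} → ℚ) :=
      (Matrix.of (fun (y : {y // y ∈ W}) (x : {x // x ∈ s}) => M y.1 x.1.1)).mulVecLin with hφ
    have hnotinj : ¬ Function.Injective φ := by
      intro hφinj
      have := LinearMap.finrank_le_finrank_of_injective hφinj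
      rw [Module.finrank_fintype_fun_eq_card, Module.finrank_fintype_fun_eq_card,
        Fintype.card_coe, Fintype.card_coe] at this
      omega
    rw [injective_iff_map_eq_zero'] at hnotinj
    push_neg at hnotinj
    obtain ⟨u, hu⟩ := hnotinj
    rcases hu with ⟨hu0, hune⟩ | ⟨hune, hu0⟩
    swap
    · exact absurd (by simp [hu0, map_zero]) hune
    set v : X → ℚ := fun x => ∑ a : {x // x ∈ s}, if x = a.1.1 then u a else 0 with hv
    have hsupp : ∀ x, v x ≠ 0 → x ∈ T := by
      intro x hx
      obtain ⟨a, -, ha⟩ := Finset.exists_ne_zero_of_sum_ne_zero hx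
      have : x = a.1.1 := by by_contra h; simp [h] at ha
      rw [this]; exact a.1.2
    have hva : ∀ a : {x // x ∈ s}, v a.1.1 = u a := by
      intro a
      show (∑ b : {x // x ∈ s}, if (a.1.1 : X) = b.1.1 then u b else 0) = u a
      rw [Finset.sum_eq_single a]
      · simp
      · intro b _ hba
        have : ¬ (a.1.1 : X) = b.1.1 := by
          intro h; exact hba (Subtype.ext (Subtype.ext h)).symm
        simp [this]
      · intro h; exact absurd (Finset.mem_univ a) h
    have hMv : M.mulVec v = 0 := by
      funext y
      have hy : M.mulVec v y = ∑ a : {x // x ∈ s}, M y a.1.1 * u a := by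
        rw [Matrix.mulVec, dotProduct]
        simp only [hv]
        simp_rw [Finset.mul_sum]
        rw [Finset.sum_comm]
        refine Finset.sum_congr rfl (fun a _ => ?_)
        simp_rw [mul_ite, mul_zero]
        simp
      rw [hy]
      by_cases hyW : y ∈ W
      · have h0 := congrFun hu0 ⟨y, hyW⟩
        rw [hφ] at h0
        rw [Matrix.mulVecLin_apply, Matrix.mulVec, dotProduct] at h0
        simpa using h0
      · rw [Pi.zero_apply]
        refine Finset.sum_eq_zero (fun a _ => ?_)
        have : M y a.1.1 = 0 := by
          by_contra hne
          apply hyW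
          rw [hW]
          refine Finset.mem_biUnion.mpr ⟨a.1, a.2, ?_⟩
          rw [ht]
          simp [hne]
        rw [this, zero_mul]
    have hv0 := hinj v hsupp hMv
    apply hune
    funext a
    have := hva a
    rw [hv0] at this
    simpa using this.symm
  obtain ⟨g, hginj, hgmem⟩ := (Finset.all_card_le_biUnion_card_iff_exists_injective t).mp hall
  refine ⟨fun x => if h : x ∈ T then g ⟨x, h⟩ else x, ?_, ?_⟩
  · intro x hx y hy hxy
    simp only [Finset.mem_coe] at hx hy
    simp only [dif_pos hx, dif_pos hy] at hxy
    exact congrArg Subtype.val (hginj hxy)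
  · intro x hx
    simp only [dif_pos hx]
    have := hgmem ⟨x, hx⟩
    rw [ht, Finset.mem_filter] at this
    exact this.2

end Hall

section Chain

variable {X : Type*} [Fintype X] [PartialOrder X]

lemma chain_bound (ρ : X → ℕ) (c : ℕ) (U D : X → X)
    (hU1 : ∀ x, ρ x < c → ρ (U x) = ρ x + 1 ∧ x ≤ U x)
    (hU2 : ∀ x, ¬ ρ x < c → U x = x)
    (hU3 : ∀ x y, ρ x = ρ y → U x = U y → x = y)
    (hD1 : ∀ x, c < ρ x → ρ (D x) + 1 = ρ x ∧ D x ≤ x)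
    (hD2 : ∀ x, ¬ c < ρ x → D x = x)
    (hD3 : ∀ x y, ρ x = ρ y → D x = D y → x = y)
    (A : Finset X) (hA : IsAntichain (· ≤ ·) (A : Set X)) :
    A.card ≤ (Finset.univ.filter fun x => ρ x = c).card := by
  classical
  have hρU : ∀ x, ρ (U x) = if ρ x < c then ρ x + 1 else ρ x := by
    intro x
    by_cases h : ρ x < c
    · rw [if_pos h]; exact (hU1 x h).1
    · rw [if_neg h, hU2 x h]
  have hρD : ∀ x, ρ (D x) = if c < ρ x then ρ x - 1 else ρ x := by
    intro x
    by_cases h : c < ρ x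
    · rw [if_pos h]; have := (hD1 x h).1; omega
    · rw [if_neg h, hD2 x h]
  have rankUp : ∀ t : ℕ, ∀ x, ρ x ≤ c → ρ (U^[t] x) = min (ρ x + t) c := by
    intro t
    induction t with
    | zero => intro x hx; simp; omega
    | succ t ih =>
      intro x hx
      rw [Function.iterate_succ_apply]
      by_cases h : ρ x < c
      · rw [ih (U x) (by rw [(hU1 x h).1]; omega), (hU1 x h).1]; omega
      · rw [ih (U x) (by rw [hU2 x h]; omega), hU2 x h]; omega
  have rankDn : ∀ t : ℕ, ∀ x, c ≤ ρ x → ρ (D^[t] x) = max (ρ x - t) c := by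
    intro t
    induction t with
    | zero => intro x hx; simp; omega
    | succ t ih =>
      intro x hx
      rw [Function.iterate_succ_apply]
      by_cases h : c < ρ x
      · rw [ih (D x) (by have := (hD1 x h).1; omega)]
        have := (hD1 x h).1; omega
      · rw [ih (D x) (by rw [hD2 x h]; omega), hD2 x h]; omega
  have leUp : ∀ t : ℕ, ∀ x, x ≤ U^[t] x := by
    intro t
    induction t with
    | zero => intro x; simp
    | succ t ih =>
      intro x
      rw [Function.iterate_succ_apply']
      refine le_trans (ih x) ?_
      by_cases h : ρ (U^[t] x) < c
      · exact (hU1 _ h).2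
      · rw [hU2 _ h]
  have geDn : ∀ t : ℕ, ∀ x, D^[t] x ≤ x := by
    intro t
    induction t with
    | zero => intro x; simp
    | succ t ih =>
      intro x
      rw [Function.iterate_succ_apply']
      refine le_trans ?_ (ih x)
      by_cases h : c < ρ (D^[t] x)
      · exact (hD1 _ h).2
      · rw [hD2 _ h]
  have injUp : ∀ t : ℕ, ∀ x y, ρ x = ρ y → U^[t] x = U^[t] y → x = y := by
    intro t
    induction t with
    | zero => intro x y _ h; simpa using h
    | succ t ih =>
      intro x y hr h
      rw [Function.iterate_succ_apply, Function.iterate_succ_apply] at h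
      have hrU : ρ (U x) = ρ (U y) := by rw [hρU, hρU, hr]
      exact hU3 x y hr (ih (U x) (U y) hrU h)
  have injDn : ∀ t : ℕ, ∀ x y, ρ x = ρ y → D^[t] x = D^[t] y → x = y := by
    intro t
    induction t with
    | zero => intro x y _ h; simpa using h
    | succ t ih =>
      intro x y hr h
      rw [Function.iterate_succ_apply, Function.iterate_succ_apply] at h
      have hrD : ρ (D x) = ρ (D y) := by rw [hρD, hρD, hr]
      exact hD3 x y hr (ih (D x) (D y) hrD h)
  set Φ : X → X := fun x => if ρ x ≤ c then U^[c - ρ x] x else D^[ρ x - c] x with hΦdef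
  have hΦrank : ∀ x, ρ (Φ x) = c := by
    intro x
    simp only [hΦdef]
    by_cases h : ρ x ≤ c
    · rw [if_pos h, rankUp _ x h]; omega
    · rw [if_neg h, rankDn _ x (by omega)]; omega
  have hΦle : ∀ x, ρ x ≤ c → x ≤ Φ x := by
    intro x h; simp only [hΦdef]; rw [if_pos h]; exact leUp _ x
  have hΦge : ∀ x, ¬ ρ x ≤ c → Φ x ≤ x := by
    intro x h; simp only [hΦdef]; rw [if_neg h]; exact geDn _ x
  have auxUp : ∀ x y, ρ x ≤ ρ y → ρ x ≤ c → ρ y ≤ c →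
      U^[c - ρ x] x = U^[c - ρ y] y → x ≤ y := by
    intro x y hxy hxc hyc h
    have hsplit : U^[c - ρ x] x = U^[c - ρ y] (U^[ρ y - ρ x] x) := by
      rw [← Function.iterate_add_apply]
      congr 1
      omega
    rw [hsplit] at h
    have hrk : ρ (U^[ρ y - ρ x] x) = ρ y := by rw [rankUp _ x hxc]; omega
    have := injUp (c - ρ y) _ _ hrk h
    rw [← this]
    exact leUp _ x
  have auxDn : ∀ x y, ρ y ≤ ρ x → c ≤ ρ x → c ≤ ρ y →
      D^[ρ x - c] x = D^[ρ y - c] y → y ≤ x := by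
    intro x y hxy hxc hyc h
    have hsplit : D^[ρ x - c] x = D^[ρ y - c] (D^[ρ x - ρ y] x) := by
      rw [← Function.iterate_add_apply]
      congr 1
      omega
    rw [hsplit] at h
    have hrk : ρ (D^[ρ x - ρ y] x) = ρ y := by rw [rankDn _ x hxc]; omega
    have := injDn (ρ y - c) _ _ hrk h
    rw [← this]
    exact geDn _ x
  have hΦcomp : ∀ x y, Φ x = Φ y → x ≤ y ∨ y ≤ x := by
    intro x y h
    by_cases hx : ρ x ≤ c <;> by_cases hy : ρ y ≤ c
    · simp only [hΦdef] at h
      simp only [if_pos hx, if_pos hy] at h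
      rcases le_total (ρ x) (ρ y) with hr | hr
      · exact Or.inl (auxUp x y hr hx hy h)
      · exact Or.inr (auxUp y x hr hy hx h.symm)
    · exact Or.inl (le_trans (hΦle x hx) (h ▸ hΦge y hy))
    · exact Or.inr (le_trans (hΦle y hy) (h.symm ▸ hΦge x hx))
    · simp only [hΦdef] at h
      simp only [if_neg hx, if_neg hy] at h
      rcases le_total (ρ x) (ρ y) with hr | hr
      · exact Or.inl (auxDn y x hr (by omega) (by omega) h.symm)
      · exact Or.inr (auxDn x y hr (by omega) (by omega) h)
  refine Finset.card_le_card_of_injOn Φ (fun x _ => ?_) ?_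
  · simp [hΦrank x]
  · intro x hx y hy hxy
    by_contra hne
    rcases hΦcomp x y hxy with h | h
    · exact hA (Finset.mem_coe.mpr hx) (Finset.mem_coe.mpr hy) hne h
    · exact hA (Finset.mem_coe.mpr hy) (Finset.mem_coe.mpr hx) (Ne.symm hne) h

end Chain

section Mirsky

variable {X : Type*} [Fintype X] [PartialOrder X]

open scoped Classical in
noncomputable def aheight (A : Finset X) (x : X) : ℕ :=
  ((A.filter (fun y => y < x)).attach).sup (fun y => aheight A y.1 + 1)
termination_by (A.filter (fun y => y < x)).card
decreasing_by
  refine Finset.card_lt_card ⟨fun z hz => ?_, fun hsub => ?_⟩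
  · have h1 := Finset.mem_filter.mp hz
    have h2 := Finset.mem_filter.mp y.2
    exact Finset.mem_filter.mpr ⟨h1.1, lt_trans h1.2 h2.2⟩
  · have h2 := Finset.mem_filter.mp y.2
    have : (y : X) ∈ A.filter (fun z => z < (y : X)) := hsub (Finset.mem_filter.mpr ⟨h2.1, h2.2⟩)
    exact absurd (Finset.mem_filter.mp this).2 (lt_irrefl _)

open scoped Classical in
lemma aheight_lt {A : Finset X} {x y : X} (hy : y ∈ A) (hxy : y < x) :
    aheight A y < aheight A x := by
  conv_rhs => rw [aheight]
  have hmem : y ∈ A.filter (fun z => z < x) := Finset.mem_filter.mpr ⟨hy, hxy⟩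
  have := Finset.le_sup (f := fun z : {z // z ∈ A.filter (fun z => z < x)} => aheight A z.1 + 1)
    (Finset.mem_attach _ ⟨y, hmem⟩)
  exact lt_of_lt_of_le (Nat.lt_succ_self _) this

open scoped Classical in
lemma aheight_chain (A : Finset X) (x : X) (hx : x ∈ A) :
    ∃ l : List X, l.Chain' (· < ·) ∧ (∀ y ∈ l, y ∈ A) ∧
      l.length = aheight A x + 1 ∧ l.getLast? = some x := by
  generalize hgen : aheight A x = hgt
  induction hgt using Nat.strong_induction_on generalizing x with
  | _ hgt ih =>
    rcases Nat.eq_zero_or_pos hgt with h0 | hpos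
    · exact ⟨[x], List.isChain_singleton x, by simpa using hx, by simp [h0], by simp⟩
    · have hne : (A.filter (fun y => y < x)).attach.Nonempty := by
        by_contra hemp
        rw [Finset.not_nonempty_iff_eq_empty] at hemp
        have : aheight A x = 0 := by rw [aheight, hemp]; simp
        omega
      obtain ⟨⟨y, hymem⟩, -, hysup⟩ := Finset.exists_mem_eq_sup _ hne
        (fun z : {z // z ∈ A.filter (fun y => y < x)} => aheight A z.1 + 1)
      have hyx : y < x := (Finset.mem_filter.mp hymem).2
      have hyA : y ∈ A := (Finset.mem_filter.mp hymem).1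
      have hhy : aheight A x = aheight A y + 1 := by
        conv_lhs => rw [aheight]
        exact hysup
      obtain ⟨l, hl1, hl2, hl3, hl4⟩ := ih (aheight A y) (by omega) y hyA rfl
      refine ⟨l ++ [x], ?_, ?_, ?_, ?_⟩
      · show List.IsChain _ _
        rw [List.isChain_append]
        refine ⟨hl1, List.isChain_singleton x, ?_⟩
        intro z hz w hw
        simp only [List.head?_cons, Option.mem_def, Option.some.injEq] at hw
        rw [hl4] at hz
        simp only [Option.mem_def, Option.some.injEq] at hz
        rw [← hz, ← hw]
        exact hyx
      · intro z hz
        rcases List.mem_append.mp hz with h | h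
        · exact hl2 z h
        · simp only [List.mem_singleton] at h; rw [h]; exact hx
      · simp [hl3]; omega
      · simp

set_option linter.unusedSectionVars false in
open scoped Classical in
lemma aheight_lt_k {k : ℕ} (A : Finset X) (C : Fin k → Finset X)
    (hC : ∀ i, IsAntichain (· ≤ ·) (C i : Set X))
    (hA : A = Finset.univ.biUnion C) (x : X) (hx : x ∈ A) :
    aheight A x < k := by
  obtain ⟨l, hl1, hl2, hl3, -⟩ := aheight_chain A x hx
  have hpw : l.Pairwise (· < ·) := List.isChain_iff_pairwise.mp hl1
  have hidx : ∀ i : Fin l.length, ∃ j : Fin k, l.get i ∈ C j := by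
    intro i
    have : l.get i ∈ A := hl2 _ (by simpa using List.get_mem l i.1 i.2)
    rw [hA] at this
    obtain ⟨j, -, hj⟩ := Finset.mem_biUnion.mp this
    exact ⟨j, hj⟩
  choose g hg using hidx
  have hginj : Function.Injective g := by
    intro i i' h
    by_contra hne
    have m1 : l.get i ∈ (C (g i) : Set X) := Finset.mem_coe.mpr (hg i)
    have m2 : l.get i' ∈ (C (g i) : Set X) := Finset.mem_coe.mpr (by rw [h]; exact hg i')
    rcases Ne.lt_or_gt (fun hii : i = i' => hne hii) with hlt | hlt
    · have hord : l.get i < l.get i' := List.pairwise_iff_get.mp hpw i i' hlt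
      exact hC (g i) m1 m2 (ne_of_lt hord) (le_of_lt hord)
    · have hord : l.get i' < l.get i := List.pairwise_iff_get.mp hpw i' i hlt
      exact hC (g i) m2 m1 (ne_of_lt hord) (le_of_lt hord)
  have := Fintype.card_le_of_injective g hginj
  simp only [Fintype.card_fin, hl3] at this
  omega

set_option linter.unusedSectionVars false in
open scoped Classical in
lemma exists_product_antichain {k : ℕ} (hk : 0 < k) (A : Finset X)
    (C : Fin k → Finset X)
    (hC : ∀ i, IsAntichain (· ≤ ·) (C i : Set X))
    (hA : A = Finset.univ.biUnion C) :
    ∃ A' : Finset (X × Fin k), IsAntichain (· ≤ ·) (A' : Set (X × Fin k)) ∧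
      A'.card = A.card := by
  have hbd : ∀ x ∈ A, aheight A x < k := fun x hx => aheight_lt_k A C hC hA x hx
  set f : X → X × Fin k := fun x => (x, ⟨(k - 1) - aheight A x, by omega⟩) with hf
  refine ⟨A.image f, ?_, ?_⟩
  · intro p hp q hq hne hle
    simp only [Finset.coe_image, Set.mem_image, Finset.mem_coe] at hp hq
    obtain ⟨x, hxA, hxp⟩ := hp
    obtain ⟨y, hyA, hyq⟩ := hq
    rw [← hxp, ← hyq] at hle hne
    have h1 : x ≤ y := (Prod.mk_le_mk.mp hle).1
    have h2 : ((k-1) - aheight A x : ℕ) ≤ (k-1) - aheight A y := by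
      have := (Prod.mk_le_mk.mp hle).2
      exact this
    have hxy : x ≠ y := by
      intro h; rw [h] at hne; exact hne rfl
    have hlt : x < y := lt_of_le_of_ne h1 hxy
    have := aheight_lt hxA hlt
    have hxk := hbd x hxA
    have hyk := hbd y hyA
    omega
  · rw [Finset.card_image_of_injOn]
    intro x _ y _ h
    exact congrArg Prod.fst h

end Mirsky

section YoungOps

variable {m n : ℕ}

def yval (x : YoungL m n) (i : Fin m) : ℕ := (x.1 i : ℕ)

lemma yval_le (x : YoungL m n) (i : Fin m) : yval x i ≤ n :=
  Nat.lt_succ_iff.mp (x.1 i).2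

lemma yval_anti (x : YoungL m n) {i j : Fin m} (h : i ≤ j) : yval x j ≤ yval x i :=
  x.2 h

lemma yext {x y : YoungL m n} (h : ∀ j, yval x j = yval y j) : x = y :=
  Subtype.ext (funext fun j => Fin.ext (h j))

lemma yle_iff {x y : YoungL m n} : x ≤ y ↔ ∀ j, yval x j ≤ yval y j := by
  constructor
  · intro h j
    exact Fin.le_def.mp (h j)
  · intro h j
    exact Fin.le_def.mpr (h j)

def IsInc (i : Fin m) (x y : YoungL m n) : Prop :=
  yval y i = yval x i + 1 ∧ ∀ j, j ≠ i → yval y j = yval x j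

lemma isInc_unique_up {i : Fin m} {x y y' : YoungL m n}
    (h : IsInc i x y) (h' : IsInc i x y') : y = y' := by
  refine yext fun j => ?_
  by_cases hj : j = i
  · subst hj; rw [h.1, h'.1]
  · rw [h.2 j hj, h'.2 j hj]

lemma isInc_unique_down {i : Fin m} {x x' y : YoungL m n}
    (h : IsInc i x y) (h' : IsInc i x' y) : x = x' := by
  refine yext fun j => ?_
  by_cases hj : j = i
  · subst hj
    have := h.1; have := h'.1; omega
  · rw [← h.2 j hj, h'.2 j hj]

lemma isInc_rank {i : Fin m} {x y : YoungL m n} (h : IsInc i x y) :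
    ∑ j, yval y j = (∑ j, yval x j) + 1 := by
  have : ∀ j, yval y j = yval x j + (if j = i then 1 else 0) := by
    intro j
    by_cases hj : j = i
    · subst hj; simp [h.1]
    · simp [hj, h.2 j hj]
  rw [Finset.sum_congr rfl (fun j _ => this j), Finset.sum_add_distrib]
  simp

lemma isInc_le {i : Fin m} {x y : YoungL m n} (h : IsInc i x y) : x ≤ y := by
  rw [yle_iff]
  intro j
  by_cases hj : j = i
  · subst hj; have := h.1; omega
  · rw [h.2 j hj]

lemma exists_update (x : YoungL m n) (i : Fin m) (v : ℕ) (hv : v ≤ n)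
    (hlow : ∀ j, j < i → v ≤ yval x j) (hhigh : ∀ j, i < j → yval x j ≤ v) :
    ∃ z : YoungL m n, yval z i = v ∧ ∀ j, j ≠ i → yval z j = yval x j := by
  have hanti : Antitone fun j => ((Function.update x.1 i ⟨v, Nat.lt_succ_of_le hv⟩ j : Fin (n+1)) : ℕ) := by
    intro a b hab
    simp only [Function.update_apply]
    rcases eq_or_ne b i with hb | hb <;> rcases eq_or_ne a i with ha | ha
    · simp [ha, hb]
    · rw [if_pos hb, if_neg ha]
      subst hb
      exact hlow a (lt_of_le_of_ne hab ha)
    · rw [if_neg hb, if_pos ha]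
      subst ha
      exact hhigh b (lt_of_le_of_ne hab (Ne.symm hb))
    · rw [if_neg hb, if_neg ha]
      exact x.2 hab
  refine ⟨⟨_, hanti⟩, ?_, ?_⟩
  · show ((Function.update x.1 i _ i : Fin (n+1)) : ℕ) = v
    rw [Function.update_self]
  · intro j hj
    show ((Function.update x.1 i _ j : Fin (n+1)) : ℕ) = yval x j
    rw [Function.update_of_ne hj]
    rfl

lemma incOK_iff (i : Fin m) (x : YoungL m n) :
    (∃ y, IsInc i x y) ↔ (yval x i < n ∧ ∀ j, j < i → yval x i < yval x j) := by
  constructor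
  · rintro ⟨y, hy⟩
    have hy1 := hy.1
    constructor
    · have := yval_le y i; omega
    · intro j hj
      have h1 : yval y i ≤ yval y j := yval_anti y (le_of_lt hj)
      have h2 : yval y j = yval x j := hy.2 j (ne_of_lt hj)
      omega
  · rintro ⟨h1, h2⟩
    obtain ⟨z, hz1, hz2⟩ := exists_update x i (yval x i + 1) (by omega)
      (fun j hj => h2 j hj) (fun j hj => by have := yval_anti x (le_of_lt hj); omega)
    exact ⟨z, hz1, hz2⟩

lemma decOK_iff (i : Fin m) (x : YoungL m n) :
    (∃ z, IsInc i z x) ↔ (0 < yval x i ∧ ∀ j, i < j → yval x j < yval x i) := by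
  constructor
  · rintro ⟨z, hz⟩
    constructor
    · have := hz.1; omega
    · intro j hj
      have h1 : yval z j ≤ yval z i := yval_anti z (le_of_lt hj)
      have h2 : yval x j = yval z j := hz.2 j (ne_of_gt hj)
      have := hz.1
      omega
  · rintro ⟨h1, h2⟩
    obtain ⟨z, hz1, hz2⟩ := exists_update x i (yval x i - 1)
      (by have := yval_le x i; omega)
      (fun j hj => by have := yval_anti x (le_of_lt hj); omega)
      (fun j hj => by have := h2 j hj; omega)
    refine ⟨z, ?_, fun j hj => (hz2 j hj).symm⟩
    omega

def VR (i i' : Fin m) (x y : YoungL m n) : Prop :=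
  yval y i = yval x i + 1 ∧ yval x i' = yval y i' + 1 ∧
    ∀ j, j ≠ i → j ≠ i' → yval y j = yval x j

lemma vr_exists_z {i i' : Fin m} (hne : i ≠ i') {x y : YoungL m n} (h : VR i i' x y) :
    ∃ z, IsInc i z y ∧ IsInc i' z x := by
  obtain ⟨h1, h2, h3⟩ := h
  obtain ⟨z, hz1, hz2⟩ := exists_update x i' (yval x i' - 1)
    (by have := yval_le x i'; omega)
    (fun j hj => by have := yval_anti x (le_of_lt hj); omega)
    (fun j hj => by
      -- i' < j : yval x j ≤ yval x i' - 1
      by_cases hji : j = i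
      · subst hji
        have hy := yval_anti y (le_of_lt hj)
        omega
      · have := h3 j hji (ne_of_gt hj)
        have hy := yval_anti y (le_of_lt hj)
        omega)
  refine ⟨z, ⟨?_, ?_⟩, ⟨by omega, fun j hj => (hz2 j hj).symm⟩⟩
  · rw [hz2 i hne]; exact h1
  · intro j hj
    by_cases hji' : j = i'
    · subst hji'; omega
    · rw [hz2 j hji']; exact h3 j hj hji'

lemma vr_exists_w {i i' : Fin m} (hne : i ≠ i') {x y : YoungL m n} (h : VR i i' x y) :
    ∃ w, IsInc i' y w ∧ IsInc i x w := by
  obtain ⟨h1, h2, h3⟩ := h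
  obtain ⟨w, hw1, hw2⟩ := exists_update x i (yval x i + 1)
    (by have := yval_le y i; omega)
    (fun j hj => by
      by_cases hji' : j = i'
      · subst hji'
        have hy := yval_anti y (le_of_lt hj)
        omega
      · have h4 := h3 j (ne_of_lt hj) hji'
        have hy := yval_anti y (le_of_lt hj)
        omega)
    (fun j hj => by have := yval_anti x (le_of_lt hj); omega)
  refine ⟨w, ⟨?_, ?_⟩, ⟨hw1, hw2⟩⟩
  · rw [hw2 i' (Ne.symm hne)]; exact h2
  · intro j hj
    by_cases hji : j = i
    · subst hji; omega
    · rw [hw2 j hji]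
      exact (h3 j hji hj).symm

lemma vr_of_both_z {i i' : Fin m} (hne : i ≠ i') {x y z : YoungL m n}
    (hz1 : IsInc i z y) (hz2 : IsInc i' z x) : VR i i' x y := by
  refine ⟨?_, ?_, fun j hji hji' => ?_⟩
  · have e1 := hz1.1
    have e2 := hz2.2 i hne
    omega
  · have e1 := hz2.1
    have e2 := hz1.2 i' (Ne.symm hne)
    omega
  · rw [hz1.2 j hji, hz2.2 j hji']

lemma vr_of_both_w {i i' : Fin m} (hne : i ≠ i') {x y w : YoungL m n}
    (hw1 : IsInc i' y w) (hw2 : IsInc i x w) : VR i i' x y := by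
  refine ⟨?_, ?_, fun j hji hji' => ?_⟩
  · have e1 := hw2.1
    have e2 := hw1.2 i (fun hh => hne hh)
    omega
  · have e1 := hw1.1
    have e2 := hw2.2 i' (Ne.symm hne)
    omega
  · rw [← hw1.2 j hji', hw2.2 j hji]

noncomputable def gam (N j : ℕ) : ℚ := (((j + 1) * (N - 1 - j) : ℕ) : ℚ)

def Jpos (x : YoungL m n) (i : Fin m) : ℕ := yval x i + (m - 1 - i.1)

noncomputable def Eop (i : Fin m) : Matrix (YoungL m n) (YoungL m n) ℚ :=
  fun y x => if IsInc i x y then 1 else 0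

noncomputable def Fop (i : Fin m) : Matrix (YoungL m n) (YoungL m n) ℚ :=
  fun y x => if IsInc i y x then gam (m + n) (Jpos y i) else 0

lemma eop_mul_fop {i i' : Fin m} (hne : i ≠ i') :
    (Eop i * Fop i' : Matrix (YoungL m n) (YoungL m n) ℚ) = Fop i' * Eop i := by
  ext y x
  rw [Matrix.mul_apply, Matrix.mul_apply]
  by_cases hvr : VR i i' x y
  · obtain ⟨z, hz1, hz2⟩ := vr_exists_z hne hvr
    obtain ⟨w, hw1, hw2⟩ := vr_exists_w hne hvr
    rw [Finset.sum_eq_single z, Finset.sum_eq_single w]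
    · simp only [Eop, Fop, if_pos hz1, if_pos hz2, if_pos hw1, if_pos hw2]
      rw [one_mul, mul_one]
      congr 1
      unfold Jpos
      have e1 := hz2.1
      have e2 := hvr.2.1
      omega
    · intro b _ hb
      simp only [Eop, Fop]
      by_cases h1 : IsInc i' y b
      · by_cases h2 : IsInc i x b
        · exact absurd (isInc_unique_up h2 hw2) hb
        · simp [h2]
      · simp [h1]
    · intro h; exact absurd (Finset.mem_univ w) h
    · intro b _ hb
      simp only [Eop, Fop]
      by_cases h1 : IsInc i b y
      · by_cases h2 : IsInc i' b x
        · exact absurd (isInc_unique_down h2 hz2) hb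
        · simp [h2]
      · simp [h1]
    · intro h; exact absurd (Finset.mem_univ z) h
  · rw [Finset.sum_eq_zero, Finset.sum_eq_zero]
    · intro b _
      simp only [Eop, Fop]
      by_cases h1 : IsInc i' y b
      · by_cases h2 : IsInc i x b
        · exact absurd (vr_of_both_w hne h1 h2) hvr
        · simp [h2]
      · simp [h1]
    · intro b _
      simp only [Eop, Fop]
      by_cases h1 : IsInc i b y
      · by_cases h2 : IsInc i' b x
        · exact absurd (vr_of_both_z hne h1 h2) hvr
        · simp [h2]
      · simp [h1]

lemma eop_mul_fop_self (i : Fin m) (y x : YoungL m n) :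
    (Eop i * Fop i : Matrix (YoungL m n) (YoungL m n) ℚ) y x =
      if y = x ∧ (0 < yval x i ∧ ∀ j, i < j → yval x j < yval x i) then
        gam (m + n) ((yval x i - 1) + (m - 1 - i.1)) else 0 := by
  rw [Matrix.mul_apply]
  by_cases hc : (0 < yval x i ∧ ∀ j, i < j → yval x j < yval x i)
  · obtain ⟨z, hz⟩ := (decOK_iff i x).mpr hc
    by_cases hyx : y = x
    · subst hyx
      rw [if_pos ⟨rfl, hc⟩, Finset.sum_eq_single z]
      · simp only [Eop, Fop, if_pos hz]
        rw [one_mul]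
        congr 1
        unfold Jpos
        have := hz.1
        omega
      · intro b _ hb
        simp only [Eop, Fop]
        by_cases h1 : IsInc i b y
        · by_cases h2 : IsInc i b y
          · exact absurd (isInc_unique_down h1 hz) hb
          · simp [h2]
        · simp [h1]
      · intro h; exact absurd (Finset.mem_univ z) h
    · rw [if_neg (fun hh => hyx hh.1), Finset.sum_eq_zero]
      intro b _
      simp only [Eop, Fop]
      by_cases h1 : IsInc i b y
      · by_cases h2 : IsInc i b x
        · exact absurd (isInc_unique_up h2 h1) (fun hh => hyx hh.symm)
        · simp [h2]
      · simp [h1]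
  · rw [if_neg (fun hh => hc hh.2), Finset.sum_eq_zero]
    intro b _
    simp only [Eop, Fop]
    by_cases h2 : IsInc i b x
    · exact absurd ((decOK_iff i x).mp ⟨b, h2⟩) hc
    · simp [h2]

lemma fop_mul_eop_self (i : Fin m) (y x : YoungL m n) :
    (Fop i * Eop i : Matrix (YoungL m n) (YoungL m n) ℚ) y x =
      if y = x ∧ (yval x i < n ∧ ∀ j, j < i → yval x i < yval x j) then
        gam (m + n) (Jpos x i) else 0 := by
  rw [Matrix.mul_apply]
  by_cases hc : (yval x i < n ∧ ∀ j, j < i → yval x i < yval x j)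
  · obtain ⟨w, hw⟩ := (incOK_iff i x).mpr hc
    by_cases hyx : y = x
    · subst hyx
      rw [if_pos ⟨rfl, hc⟩, Finset.sum_eq_single w]
      · simp only [Eop, Fop, if_pos hw]
        rw [mul_one]
      · intro b _ hb
        simp only [Eop, Fop]
        by_cases h2 : IsInc i y b
        · exact absurd (isInc_unique_up h2 hw) hb
        · simp [h2]
      · intro h; exact absurd (Finset.mem_univ w) h
    · rw [if_neg (fun hh => hyx hh.1), Finset.sum_eq_zero]
      intro b _
      simp only [Eop, Fop]
      by_cases h1 : IsInc i y b
      · by_cases h2 : IsInc i x b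
        · exact absurd (isInc_unique_down h1 h2) hyx
        · simp [h2]
      · simp [h1]
  · rw [if_neg (fun hh => hc hh.2), Finset.sum_eq_zero]
    intro b _
    simp only [Eop, Fop]
    by_cases h2 : IsInc i x b
    · exact absurd ((incOK_iff i x).mp ⟨b, h2⟩) hc
    · simp [h2]

lemma gam_diff (N j : ℕ) (hj : j ≤ N - 1) (hN : 1 ≤ N) :
    (if j = 0 then (0:ℚ) else gam N (j-1)) - gam N j = 2*(j:ℚ) - ((N-1 : ℕ) : ℚ) := by
  rcases Nat.eq_zero_or_pos j with h0 | hpos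
  · subst h0
    rw [if_pos rfl]
    unfold gam
    have e : N - 1 - 0 = N - 1 := by omega
    rw [e]
    push_cast
    ring
  · rw [if_neg (by omega)]
    obtain ⟨d, hd⟩ : ∃ d, N - 1 = j + d := ⟨N-1-j, by omega⟩
    unfold gam
    have f1 : j - 1 + 1 = j := by omega
    have f2 : N - 1 - (j-1) = d + 1 := by omega
    have f3 : N - 1 - j = d := by omega
    rw [f1, f2, f3, hd]
    push_cast
    ring

lemma young_diag_sum (hm : 0 < m) (x : YoungL m n) :
    ∑ i : Fin m,
      ((if (0 < yval x i ∧ ∀ j, i < j → yval x j < yval x i) then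
          gam (m+n) ((yval x i - 1) + (m-1-i.1)) else 0)
        - (if (yval x i < n ∧ ∀ j, j < i → yval x i < yval x j) then
          gam (m+n) (yval x i + (m-1-i.1)) else 0))
      = 2*((∑ i, yval x i : ℕ) : ℚ) - ((m*n : ℕ) : ℚ) := by
  classical
  set N := m + n with hNdef
  set v : ℕ → ℕ := fun t => if h : t < m then yval x ⟨t, h⟩ else 0 with hvdef
  have hvanti : ∀ t t' : ℕ, t ≤ t' → v t' ≤ v t := by
    intro t t' h
    simp only [hvdef]
    by_cases h2 : t' < m
    · rw [dif_pos h2, dif_pos (lt_of_le_of_lt h h2)]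
      exact x.2 (by exact h)
    · rw [dif_neg h2]
      exact Nat.zero_le _
  have hvn : ∀ t, v t ≤ n := by
    intro t
    simp only [hvdef]
    by_cases h2 : t < m
    · rw [dif_pos h2]; exact yval_le x _
    · rw [dif_neg h2]; exact Nat.zero_le _
  set J : ℕ → ℕ := fun t => v t + (m - 1 - t) with hJdef
  set gamP : ℕ → ℚ := fun j => if j = 0 then 0 else gam N (j-1) with hgamPdef
  set f : ℕ → ℚ := fun t =>
    (if (0 < v t ∧ (t+1 = m ∨ v (t+1) < v t)) then gam N (v t - 1 + (m-1-t)) else 0)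
    - (if (v t < n ∧ (t = 0 ∨ v t < v (t-1))) then gam N (J t) else 0) with hfdef
  have hvi : ∀ i : Fin m, v i.1 = yval x i := by
    intro i
    simp only [hvdef]
    rw [dif_pos i.isLt]
  -- step 1 : convert the Fin sum to a range sum
  have step1 : ∑ i : Fin m,
      ((if (0 < yval x i ∧ ∀ j, i < j → yval x j < yval x i) then
          gam (m+n) ((yval x i - 1) + (m-1-i.1)) else 0)
        - (if (yval x i < n ∧ ∀ j, j < i → yval x i < yval x j) then
          gam (m+n) (yval x i + (m-1-i.1)) else 0)) = ∑ t ∈ Finset.range m, f t := by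
    rw [← Fin.sum_univ_eq_sum_range f m]
    refine Finset.sum_congr rfl (fun i _ => ?_)
    have hdec : (∀ j, i < j → yval x j < yval x i) ↔ (i.1+1 = m ∨ v (i.1+1) < v i.1) := by
      constructor
      · intro hh
        by_cases he : i.1 + 1 = m
        · exact Or.inl he
        · right
          have hlt : i.1 + 1 < m := by have := i.isLt; omega
          have := hh ⟨i.1+1, hlt⟩ (by simp [Fin.lt_def])
          rw [hvi i]
          simp only [hvdef]
          rw [dif_pos hlt]
          exact this
      · intro hh j hij
        rcases hh with he | hlt
        · have := j.isLt
          rw [Fin.lt_def] at hij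
          omega
        · have h1 : v j.1 ≤ v (i.1+1) := hvanti _ _ (by rw [Fin.lt_def] at hij; omega)
          have h2 : v j.1 = yval x j := hvi j
          have h3 := hvi i
          omega
    have hinc : (∀ j, j < i → yval x i < yval x j) ↔ (i.1 = 0 ∨ v i.1 < v (i.1-1)) := by
      constructor
      · intro hh
        by_cases he : i.1 = 0
        · exact Or.inl he
        · right
          have hlt : i.1 - 1 < m := by have := i.isLt; omega
          have := hh ⟨i.1-1, hlt⟩ (by simp only [Fin.lt_def]; simp; omega)
          rw [hvi i]
          simp only [hvdef]
          rw [dif_pos hlt]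
          exact this
      · intro hh j hji
        rcases hh with he | hlt
        · rw [Fin.lt_def] at hji
          omega
        · have h1 : v (i.1-1) ≤ v j.1 := hvanti _ _ (by rw [Fin.lt_def] at hji; omega)
          have h2 : v j.1 = yval x j := hvi j
          have h3 := hvi i
          omega
    simp only [hfdef, hJdef, hvi i, hdec, hinc, hNdef]
  rw [step1]
  -- step 2 : termwise rewrite
  have step2 : ∀ t ∈ Finset.range m, f t =
      ((gamP (J t) - gam N (J t))
        - ((if (t+1 < m ∧ v (t+1) = v t) then gamP (J t) else 0)
            - (if (0 < t ∧ v (t-1) = v t) then gam N (J t) else 0))) := by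
    intro t htm
    rw [Finset.mem_range] at htm
    have E1 : (if (0 < v t ∧ (t+1 = m ∨ v (t+1) < v t)) then gam N (v t - 1 + (m-1-t)) else 0)
        = gamP (J t) - (if (t+1 < m ∧ v (t+1) = v t) then gamP (J t) else 0) := by
      by_cases hd : (0 < v t ∧ (t+1 = m ∨ v (t+1) < v t))
      · rw [if_pos hd]
        have hJ0 : J t ≠ 0 := by simp only [hJdef]; omega
        have hcond : ¬(t+1 < m ∧ v (t+1) = v t) := by
          rcases hd.2 with he | hlt
          · omega
          · rintro ⟨-, heq⟩; omega
        rw [if_neg hcond, sub_zero]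
        simp only [hgamPdef]
        rw [if_neg hJ0]
        congr 1
        simp only [hJdef]
        omega
      · rw [if_neg hd]
        by_cases hv0 : v t = 0
        · by_cases htm1 : t + 1 < m
          · have : v (t+1) = v t := by have := hvanti t (t+1) (by omega); omega
            rw [if_pos ⟨htm1, this⟩]; ring
          · have hJ0 : J t = 0 := by simp only [hJdef]; omega
            rw [if_neg (by omega)]
            simp only [hgamPdef]
            rw [if_pos hJ0]
            ring
        · have h1 : ¬(t+1 = m ∨ v (t+1) < v t) := fun hor => hd ⟨by omega, hor⟩
          push_neg at h1
          have h2 : v (t+1) = v t := by have := hvanti t (t+1) (by omega); omega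
          rw [if_pos ⟨by omega, h2⟩]
          ring
    have E2 : (if (v t < n ∧ (t = 0 ∨ v t < v (t-1))) then gam N (J t) else 0)
        = gam N (J t) - (if (0 < t ∧ v (t-1) = v t) then gam N (J t) else 0) := by
      by_cases hu : (v t < n ∧ (t = 0 ∨ v t < v (t-1)))
      · rw [if_pos hu]
        have hcond : ¬(0 < t ∧ v (t-1) = v t) := by
          rcases hu.2 with he | hlt
          · omega
          · rintro ⟨-, heq⟩; omega
        rw [if_neg hcond, sub_zero]
      · rw [if_neg hu]
        by_cases hvn0 : v t = n
        · by_cases ht0 : t = 0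
          · subst ht0
            rw [if_neg (by omega), sub_zero]
            have hJ : J 0 = N - 1 := by simp only [hJdef]; omega
            rw [hJ]
            unfold gam
            have : N - 1 - (N - 1) = 0 := by omega
            rw [this, Nat.mul_zero]
            simp
          · have : v (t-1) = v t := by
              have h1 := hvanti (t-1) t (by omega)
              have h2 := hvn (t-1)
              omega
            rw [if_pos ⟨by omega, this⟩]; ring
        · have h1 : ¬(t = 0 ∨ v t < v (t-1)) := by
            have := hvn t
            exact fun hor => hu ⟨by omega, hor⟩
          push_neg at h1
          have h2 : v (t-1) = v t := by have := hvanti (t-1) t (by omega); omega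
          rw [if_pos ⟨by omega, h2⟩]; ring
    simp only [hfdef]
    rw [E1, E2]
    ring
  rw [Finset.sum_congr rfl step2]
  -- step 3 : the two boundary sums coincide
  have step3 : ∑ t ∈ Finset.range m, (if (0 < t ∧ v (t-1) = v t) then gam N (J t) else 0)
      = ∑ t ∈ Finset.range m, (if (t+1 < m ∧ v (t+1) = v t) then gamP (J t) else 0) := by
    obtain ⟨m', hm'⟩ : ∃ m', m = m' + 1 := ⟨m - 1, by omega⟩
    subst hm'
    rw [Finset.sum_range_succ' _ m', Finset.sum_range_succ _ m']
    simp only [Nat.add_sub_cancel]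
    rw [if_neg (by omega), if_neg (by omega), add_zero, add_zero]
    refine Finset.sum_congr rfl (fun t htm => ?_)
    rw [Finset.mem_range] at htm
    by_cases hc : v (t+1) = v t
    · rw [if_pos ⟨by omega, by omega⟩, if_pos ⟨by omega, hc⟩]
      have hJpos : J t ≠ 0 := by simp only [hJdef]; omega
      simp only [hgamPdef]
      rw [if_neg hJpos]
      congr 1
      simp only [hJdef]
      omega
    · rw [if_neg (by omega), if_neg (by omega)]
  -- assemble
  rw [Finset.sum_sub_distrib]
  have hzero : ∑ t ∈ Finset.range m,
      ((if (t+1 < m ∧ v (t+1) = v t) then gamP (J t) else 0)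
        - (if (0 < t ∧ v (t-1) = v t) then gam N (J t) else 0)) = 0 := by
    rw [Finset.sum_sub_distrib, ← step3, sub_self]
  rw [hzero, sub_zero]
  -- step 4 : gam differences
  have step4 : ∀ t ∈ Finset.range m, gamP (J t) - gam N (J t)
      = 2*((J t : ℕ) : ℚ) - ((N-1 : ℕ) : ℚ) := by
    intro t htm
    rw [Finset.mem_range] at htm
    have hJle : J t ≤ N - 1 := by
      have := hvn t
      simp only [hJdef, hNdef]
      omega
    exact gam_diff N (J t) hJle (by omega)
  rw [Finset.sum_congr rfl step4]
  rw [Finset.sum_sub_distrib, Finset.sum_const, Finset.card_range, ← Finset.mul_sum]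
  have hsumJ : ∑ t ∈ Finset.range m, ((J t : ℕ) : ℚ)
      = ((∑ i, yval x i : ℕ) : ℚ) + ((∑ t ∈ Finset.range m, (m-1-t) : ℕ) : ℚ) := by
    rw [← Nat.cast_sum, ← Nat.cast_add]
    congr 1
    have h1 : ∑ t ∈ Finset.range m, J t
        = (∑ t ∈ Finset.range m, v t) + ∑ t ∈ Finset.range m, (m-1-t) := by
      rw [← Finset.sum_add_distrib]
    rw [h1]
    congr 1
    rw [← Fin.sum_univ_eq_sum_range v m]
    exact Finset.sum_congr rfl (fun i _ => hvi i)
  rw [hsumJ]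
  set S : ℕ := ∑ t ∈ Finset.range m, (m-1-t) with hSdef
  have hgauss : S * 2 = m * (m-1) := by
    rw [hSdef]
    have h1 : ∑ t ∈ Finset.range m, (m-1-t) = ∑ t ∈ Finset.range m, t := by
      exact Finset.sum_range_reflect (fun j => j) m
    rw [h1]
    exact Finset.sum_range_id_mul_two m
  have c1 : ((N-1 : ℕ) : ℚ) = (m:ℚ) + n - 1 := by
    have : N - 1 = m + n - 1 := rfl
    rw [this]
    push_cast [Nat.cast_sub (by omega : 1 ≤ m + n)]
    ring
  have c2 : ((S:ℚ)) * 2 = (m:ℚ) * ((m:ℚ) - 1) := by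
    have h2 : ((S*2 : ℕ) : ℚ) = ((m*(m-1) : ℕ) : ℚ) := by exact_mod_cast congrArg (Nat.cast : ℕ → ℚ) hgauss
    push_cast [Nat.cast_sub (show 1 ≤ m by omega)] at h2
    linarith [h2]
  rw [c1]
  push_cast
  linear_combination c2

noncomputable def EP (m n : ℕ) : Matrix (YoungL m n) (YoungL m n) ℚ := ∑ i, Eop i
noncomputable def FP (m n : ℕ) : Matrix (YoungL m n) (YoungL m n) ℚ := ∑ i, Fop i

lemma youngH (hm : 0 < m) : EP m n * FP m n - FP m n * EP m n
    = Matrix.diagonal (fun x : YoungL m n =>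
        2*((∑ i, yval x i : ℕ) : ℚ) - ((m*n : ℕ) : ℚ)) := by
  have h1 : EP m n * FP m n = ∑ i : Fin m, ∑ i' : Fin m, Eop i * Fop i' := by
    unfold EP FP
    rw [Matrix.sum_mul]
    exact Finset.sum_congr rfl (fun i _ => Matrix.mul_sum _ _ _)
  have h2 : FP m n * EP m n = ∑ i : Fin m, ∑ i' : Fin m, Fop i' * Eop i := by
    unfold EP FP
    rw [Matrix.sum_mul, Finset.sum_comm]
    exact Finset.sum_congr rfl (fun i _ => Matrix.mul_sum _ _ _)
  rw [h1, h2, ← Finset.sum_sub_distrib]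
  have h3 : ∀ i : Fin m,
      ((∑ i' : Fin m, (Eop i * Fop i' : Matrix (YoungL m n) (YoungL m n) ℚ))
          - (∑ i' : Fin m, Fop i' * Eop i))
        = Eop i * Fop i - Fop i * Eop i := by
    intro i
    rw [← Finset.sum_sub_distrib]
    refine Finset.sum_eq_single i (fun b _ hb => ?_) (fun h => absurd (Finset.mem_univ i) h)
    rw [eop_mul_fop (show i ≠ b from fun h => hb h.symm)]
    exact sub_self _
  rw [Finset.sum_congr rfl (fun i _ => h3 i)]
  ext y x
  rw [Matrix.sum_apply]
  by_cases hyx : y = x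
  · subst hyx
    rw [Matrix.diagonal_apply_eq]
    have : ∀ i : Fin m,
        ((Eop i * Fop i - Fop i * Eop i : Matrix (YoungL m n) (YoungL m n) ℚ)) y y
        = ((if (0 < yval y i ∧ ∀ j, i < j → yval y j < yval y i) then
            gam (m+n) ((yval y i - 1) + (m-1-i.1)) else 0)
          - (if (yval y i < n ∧ ∀ j, j < i → yval y i < yval y j) then
            gam (m+n) (yval y i + (m-1-i.1)) else 0)) := by
      intro i
      rw [Matrix.sub_apply, eop_mul_fop_self, fop_mul_eop_self]
      simp only [true_and, Jpos]
    rw [Finset.sum_congr rfl (fun i _ => this i)]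
    exact young_diag_sum hm y
  · rw [Matrix.diagonal_apply_ne _ hyx]
    refine Finset.sum_eq_zero (fun i _ => ?_)
    rw [Matrix.sub_apply, eop_mul_fop_self, fop_mul_eop_self]
    rw [if_neg (fun hh => hyx hh.1), if_neg (fun hh => hyx hh.1)]
    ring

lemma EP_apply_ne {y x : YoungL m n} (h : EP m n y x ≠ 0) :
    (∑ j, yval y j = (∑ j, yval x j) + 1) ∧ x ≤ y := by
  unfold EP at h
  rw [Matrix.sum_apply] at h
  obtain ⟨i, -, hi⟩ := Finset.exists_ne_zero_of_sum_ne_zero h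
  have : IsInc i x y := by
    by_contra hc
    simp [Eop, hc] at hi
  exact ⟨isInc_rank this, isInc_le this⟩

lemma FP_apply_ne {y x : YoungL m n} (h : FP m n y x ≠ 0) :
    (∑ j, yval x j = (∑ j, yval y j) + 1) ∧ y ≤ x := by
  unfold FP at h
  rw [Matrix.sum_apply] at h
  obtain ⟨i, -, hi⟩ := Finset.exists_ne_zero_of_sum_ne_zero h
  have : IsInc i y x := by
    by_contra hc
    simp [Fop, hc] at hi
  exact ⟨isInc_rank this, isInc_le this⟩

lemma yrank_le (x : YoungL m n) : ∑ i, yval x i ≤ m * n := by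
  calc ∑ i, yval x i ≤ ∑ _i : Fin m, n := Finset.sum_le_sum (fun i _ => yval_le x i)
  _ = m * n := by simp [Finset.sum_const, mul_comm]

end YoungOps

section ChainOps

noncomputable def EC (k : ℕ) : Matrix (Fin k) (Fin k) ℚ :=
  fun y x => if y.1 = x.1 + 1 then 1 else 0

noncomputable def FC (k : ℕ) : Matrix (Fin k) (Fin k) ℚ :=
  fun y x => if x.1 = y.1 + 1 then gam k y.1 else 0

lemma gam_self_top (k : ℕ) : gam k (k-1) = 0 := by
  unfold gam
  have : k - 1 - (k-1) = 0 := by omega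
  rw [this, Nat.mul_zero, Nat.cast_zero]

lemma chainH (k : ℕ) (hk : 0 < k) : EC k * FC k - FC k * EC k
    = Matrix.diagonal (fun j : Fin k => 2*(j.1:ℚ) - ((k-1 : ℕ) : ℚ)) := by
  ext y x
  rw [Matrix.sub_apply, Matrix.mul_apply, Matrix.mul_apply]
  have hEF : ∑ z : Fin k, EC k y z * FC k z x
      = if y = x ∧ 1 ≤ x.1 then gam k (x.1 - 1) else 0 := by
    by_cases h : y = x ∧ 1 ≤ x.1
    · obtain ⟨hyx, hx1⟩ := h
      subst hyx
      rw [if_pos ⟨rfl, hx1⟩]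
      have hz0 : (y.1 - 1) < k := by have := y.isLt; omega
      rw [Finset.sum_eq_single ⟨y.1 - 1, hz0⟩]
      · unfold EC FC
        rw [if_pos (show y.1 = (⟨y.1-1,hz0⟩ : Fin k).1 + 1 by simp; omega),
          if_pos (show y.1 = (⟨y.1-1,hz0⟩ : Fin k).1 + 1 by simp; omega), one_mul]
      · intro b _ hb
        unfold EC FC
        by_cases h2 : y.1 = b.1 + 1
        · exact absurd (Fin.ext (by omega : b.1 = y.1 - 1)) hb
        · rw [if_neg h2, zero_mul]
      · intro h; exact absurd (Finset.mem_univ _) h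
    · rw [if_neg h, Finset.sum_eq_zero]
      intro z _
      unfold EC FC
      by_cases h1 : y.1 = z.1 + 1
      · by_cases h2 : x.1 = z.1 + 1
        · exact absurd ⟨Fin.ext (by omega), by omega⟩ h
        · rw [if_neg h2, mul_zero]
      · rw [if_neg h1, zero_mul]
  have hFE : ∑ z : Fin k, FC k y z * EC k z x
      = if y = x ∧ x.1 + 1 < k then gam k x.1 else 0 := by
    by_cases h : y = x ∧ x.1 + 1 < k
    · obtain ⟨hyx, hx1⟩ := h
      subst hyx
      rw [if_pos ⟨rfl, hx1⟩]
      rw [Finset.sum_eq_single ⟨y.1 + 1, hx1⟩]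
      · unfold EC FC
        rw [if_pos (show (⟨y.1+1,hx1⟩ : Fin k).1 = y.1 + 1 by simp),
          if_pos (show (⟨y.1+1,hx1⟩ : Fin k).1 = y.1 + 1 by simp), mul_one]
      · intro b _ hb
        unfold EC FC
        by_cases h2 : b.1 = y.1 + 1
        · exact absurd (Fin.ext (by omega : b.1 = y.1 + 1)) hb
        · rw [if_neg h2, zero_mul]
      · intro h; exact absurd (Finset.mem_univ _) h
    · rw [if_neg h, Finset.sum_eq_zero]
      intro z _
      unfold EC FC
      by_cases h1 : z.1 = y.1 + 1
      · by_cases h2 : z.1 = x.1 + 1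
        · exact absurd ⟨Fin.ext (by omega), by omega⟩ h
        · rw [if_neg h2, mul_zero]
      · rw [if_neg h1, zero_mul]
  rw [hEF, hFE]
  by_cases hyx : y = x
  · subst hyx
    rw [Matrix.diagonal_apply_eq]
    have e1 : (if y = y ∧ 1 ≤ y.1 then gam k (y.1 - 1) else 0)
        = (if y.1 = 0 then (0:ℚ) else gam k (y.1 - 1)) := by
      by_cases h1 : 1 ≤ y.1
      · rw [if_pos ⟨rfl, h1⟩, if_neg (by omega)]
      · rw [if_neg (fun hh => h1 hh.2), if_pos (by omega)]
    have e2 : (if y = y ∧ y.1 + 1 < k then gam k y.1 else 0) = gam k y.1 := by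
      by_cases h2 : y.1 + 1 < k
      · rw [if_pos ⟨rfl, h2⟩]
      · rw [if_neg (fun hh => h2 hh.2)]
        have : y.1 = k - 1 := by have := y.isLt; omega
        rw [this, gam_self_top]
    rw [e1, e2]
    exact gam_diff k y.1 (by have := y.isLt; omega) hk
  · rw [Matrix.diagonal_apply_ne _ hyx,
      if_neg (fun hh => hyx hh.1), if_neg (fun hh => hyx hh.1)]
    ring

lemma EC_apply_ne {k : ℕ} {y x : Fin k} (h : EC k y x ≠ 0) : y.1 = x.1 + 1 := by
  by_contra hc
  simp [EC, hc] at h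

lemma FC_apply_ne {k : ℕ} {y x : Fin k} (h : FC k y x ≠ 0) : x.1 = y.1 + 1 := by
  by_contra hc
  simp [FC, hc] at h

end ChainOps
section ProductOps

open Kronecker

noncomputable def EX (m n k : ℕ) : Matrix (YoungL m n × Fin k) (YoungL m n × Fin k) ℚ :=
  (EP m n) ⊗ₖ (1 : Matrix (Fin k) (Fin k) ℚ)
  + (1 : Matrix (YoungL m n) (YoungL m n) ℚ) ⊗ₖ (EC k)

noncomputable def FX (m n k : ℕ) : Matrix (YoungL m n × Fin k) (YoungL m n × Fin k) ℚ :=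
  (FP m n) ⊗ₖ (1 : Matrix (Fin k) (Fin k) ℚ)
  + (1 : Matrix (YoungL m n) (YoungL m n) ℚ) ⊗ₖ (FC k)

def rkX (m n k : ℕ) : YoungL m n × Fin k → ℕ := fun p => (∑ i, yval p.1 i) + p.2.1

lemma rkX_le (m n k : ℕ) (p : YoungL m n × Fin k) : rkX m n k p ≤ m*n + (k-1) := by
  unfold rkX
  have h1 := yrank_le p.1
  have h2 := p.2.isLt
  omega

lemma prodH (m n k : ℕ) (hm : 0 < m) (hk : 0 < k) :
    EX m n k * FX m n k - FX m n k * EX m n k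
      = Matrix.diagonal (fun p : YoungL m n × Fin k =>
          2*((rkX m n k p : ℕ) : ℚ) - ((m*n + (k-1) : ℕ) : ℚ)) := by
  have hP := sub_eq_iff_eq_add.mp (youngH (n := n) hm)
  have hCh := sub_eq_iff_eq_add.mp (chainH k hk)
  have key : (Matrix.diagonal (fun x : YoungL m n =>
        2*((∑ i, yval x i : ℕ) : ℚ) - ((m*n : ℕ) : ℚ))) ⊗ₖ (1 : Matrix (Fin k) (Fin k) ℚ)
      + (1 : Matrix (YoungL m n) (YoungL m n) ℚ) ⊗ₖ
          (Matrix.diagonal (fun j : Fin k => 2*(j.1:ℚ) - ((k-1 : ℕ) : ℚ)))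
      = Matrix.diagonal (fun p : YoungL m n × Fin k =>
          2*((rkX m n k p : ℕ) : ℚ) - ((m*n + (k-1) : ℕ) : ℚ)) := by
    ext ⟨a, b⟩ ⟨c, d⟩
    rw [Matrix.add_apply, Matrix.kroneckerMap_apply, Matrix.kroneckerMap_apply]
    by_cases hac : a = c <;> by_cases hbd : b = d
    · subst hac; subst hbd
      rw [Matrix.diagonal_apply_eq, Matrix.diagonal_apply_eq, Matrix.one_apply_eq,
        Matrix.one_apply_eq, Matrix.diagonal_apply_eq]
      unfold rkX
      push_cast
      ring
    · have hne : ((a, b) : YoungL m n × Fin k) ≠ (c, d) := by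
        simp [Prod.ext_iff, hbd]
      rw [Matrix.one_apply_ne hbd, Matrix.diagonal_apply_ne _ hbd,
        Matrix.diagonal_apply_ne _ hne]
      ring
    · have hne : ((a, b) : YoungL m n × Fin k) ≠ (c, d) := by
        simp [Prod.ext_iff, hac]
      rw [Matrix.one_apply_ne hac, Matrix.diagonal_apply_ne _ hac,
        Matrix.diagonal_apply_ne _ hne]
      ring
    · have hne : ((a, b) : YoungL m n × Fin k) ≠ (c, d) := by
        simp [Prod.ext_iff, hac]
      rw [Matrix.one_apply_ne hac, Matrix.diagonal_apply_ne _ hac,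
        Matrix.diagonal_apply_ne _ hne]
      ring
  rw [← key]
  unfold EX FX
  rw [add_mul, add_mul, mul_add, mul_add, mul_add, mul_add]
  rw [← Matrix.mul_kronecker_mul, ← Matrix.mul_kronecker_mul, ← Matrix.mul_kronecker_mul,
    ← Matrix.mul_kronecker_mul, ← Matrix.mul_kronecker_mul, ← Matrix.mul_kronecker_mul,
    ← Matrix.mul_kronecker_mul, ← Matrix.mul_kronecker_mul]
  simp only [Matrix.one_mul, Matrix.mul_one]
  rw [hP, hCh]
  rw [Matrix.add_kronecker, Matrix.kronecker_add]
  abel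

lemma EX_apply_ne {m n k : ℕ} {q p : YoungL m n × Fin k} (h : EX m n k q p ≠ 0) :
    rkX m n k q = rkX m n k p + 1 ∧ p ≤ q := by
  unfold EX at h
  rw [Matrix.add_apply, Matrix.kroneckerMap_apply, Matrix.kroneckerMap_apply] at h
  have hcase : (EP m n q.1 p.1 ≠ 0 ∧ q.2 = p.2)
      ∨ (q.1 = p.1 ∧ EC k q.2 p.2 ≠ 0) := by
    by_cases h1 : EP m n q.1 p.1 * (1 : Matrix (Fin k) (Fin k) ℚ) q.2 p.2 ≠ 0
    · left
      refine ⟨left_ne_zero_of_mul h1, ?_⟩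
      by_contra hc
      rw [Matrix.one_apply_ne hc, mul_zero] at h1
      exact h1 rfl
    · right
      push_neg at h1
      rw [h1, zero_add] at h
      refine ⟨?_, right_ne_zero_of_mul h⟩
      have := left_ne_zero_of_mul h
      by_contra hc
      rw [Matrix.one_apply_ne hc] at this
      exact this rfl
  rcases hcase with ⟨h1, h2⟩ | ⟨h1, h2⟩
  · obtain ⟨hr, hle⟩ := EP_apply_ne h1
    have h2v := congrArg Fin.val h2
    constructor
    · unfold rkX; omega
    · exact Prod.le_def.mpr ⟨hle, le_of_eq h2.symm⟩
  · have h2v := EC_apply_ne h2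
    have h1v : (∑ i, yval q.1 i) = ∑ i, yval p.1 i := by rw [h1]
    constructor
    · unfold rkX; omega
    · exact Prod.le_def.mpr ⟨le_of_eq h1.symm, by rw [Fin.le_def]; omega⟩

lemma FX_apply_ne {m n k : ℕ} {q p : YoungL m n × Fin k} (h : FX m n k q p ≠ 0) :
    rkX m n k p = rkX m n k q + 1 ∧ q ≤ p := by
  unfold FX at h
  rw [Matrix.add_apply, Matrix.kroneckerMap_apply, Matrix.kroneckerMap_apply] at h
  have hcase : (FP m n q.1 p.1 ≠ 0 ∧ q.2 = p.2)
      ∨ (q.1 = p.1 ∧ FC k q.2 p.2 ≠ 0) := by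
    by_cases h1 : FP m n q.1 p.1 * (1 : Matrix (Fin k) (Fin k) ℚ) q.2 p.2 ≠ 0
    · left
      refine ⟨left_ne_zero_of_mul h1, ?_⟩
      by_contra hc
      rw [Matrix.one_apply_ne hc, mul_zero] at h1
      exact h1 rfl
    · right
      push_neg at h1
      rw [h1, zero_add] at h
      refine ⟨?_, right_ne_zero_of_mul h⟩
      have := left_ne_zero_of_mul h
      by_contra hc
      rw [Matrix.one_apply_ne hc] at this
      exact this rfl
  rcases hcase with ⟨h1, h2⟩ | ⟨h1, h2⟩
  · obtain ⟨hr, hle⟩ := FP_apply_ne h1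
    have h2v := congrArg Fin.val h2
    constructor
    · unfold rkX; omega
    · exact Prod.le_def.mpr ⟨hle, le_of_eq h2⟩
  · have h2v := FC_apply_ne h2
    have h1v : (∑ i, yval q.1 i) = ∑ i, yval p.1 i := by rw [h1]
    constructor
    · unfold rkX; omega
    · exact Prod.le_def.mpr ⟨le_of_eq h1, by rw [Fin.le_def]; omega⟩

end ProductOps

/-- `L(m,n)` has the strong Sperner property: if `A ⊆ L(m,n)` is a union of
`k` antichains, then `|A|` is at most the sum of the `k` largest rank numbers,
i.e. the maximum of `∑_{s ∈ S} p_s` over subsets `S ⊆ {0, …, mn}` with at most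
`k` elements. -/
theorem youngL_strong_sperner (m n k : ℕ) (hm : 0 < m) (hn : 0 < n) (hk : 0 < k)
    (A : Finset (YoungL m n)) (C : Fin k → Finset (YoungL m n))
    (hC : ∀ i, IsAntichain (· ≤ ·) (C i : Set (YoungL m n)))
    (hA : A = Finset.univ.biUnion C) :
    A.card ≤
      (((Finset.range (m * n + 1)).powerset.filter fun S => S.card ≤ k).sup
        fun S => ∑ s ∈ S, youngRankNum m n s) := by
  obtain ⟨A', hA'anti, hA'card⟩ := exists_product_antichain hk A C hC hA
  set L : ℕ := m*n + (k-1) with hLdef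
  set c : ℕ := (L+1)/2 with hcdef
  have hFsupp : ∀ x y : YoungL m n × Fin k, FX m n k y x ≠ 0 →
      rkX m n k x = rkX m n k y + 1 := fun x y h => (FX_apply_ne h).1
  have hEsupp : ∀ x y : YoungL m n × Fin k, EX m n k y x ≠ 0 →
      rkX m n k y = rkX m n k x + 1 := fun x y h => (EX_apply_ne h).1
  have hCX := prodH m n k hm hk
  rw [← hLdef] at hCX
  have hρle : ∀ p, rkX m n k p ≤ L := rkX_le m n k
  have hLpos : 1 ≤ L := by have := Nat.mul_pos hm hn; omega
  have hCX' : FX m n k * EX m n k - EX m n k * FX m n k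
      = Matrix.diagonal (fun p : YoungL m n × Fin k =>
          2*((L - rkX m n k p : ℕ) : ℚ) - ((L : ℕ) : ℚ)) := by
    have h := congrArg Neg.neg hCX
    rw [neg_sub] at h
    have hfun : (fun p : YoungL m n × Fin k => -(2 * ((rkX m n k p : ℕ) : ℚ) - ((L:ℕ):ℚ)))
        = (fun p : YoungL m n × Fin k => 2*((L - rkX m n k p : ℕ) : ℚ) - ((L : ℕ) : ℚ)) := by
      funext p
      rw [Nat.cast_sub (hρle p)]
      push_cast
      ring
    rw [h, Matrix.diagonal_neg, hfun]
  -- up matchings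
  have hup : ∀ s, 2*s < L → ∃ f : (YoungL m n × Fin k) → (YoungL m n × Fin k),
      Set.InjOn f (Finset.univ.filter (fun p => rkX m n k p = s)) ∧
      ∀ p ∈ Finset.univ.filter (fun p => rkX m n k p = s), EX m n k (f p) p ≠ 0 := by
    intro s hs
    apply matching_of_inj
    intro v hv hEv
    refine sl2_inj (rkX m n k) L (EX m n k) (FX m n k) hFsupp hCX
      s hs v (fun p hp => ?_) hEv
    exact (Finset.mem_filter.mp (hv p hp)).2
  have hdn : ∀ s, L < 2*s → ∃ f : (YoungL m n × Fin k) → (YoungL m n × Fin k),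
      Set.InjOn f (Finset.univ.filter (fun p => rkX m n k p = s)) ∧
      ∀ p ∈ Finset.univ.filter (fun p => rkX m n k p = s), FX m n k (f p) p ≠ 0 := by
    intro s hs
    apply matching_of_inj
    intro v hv hFv
    refine sl2_inj (fun p => L - rkX m n k p) L (FX m n k) (EX m n k)
      (fun x y h => ?_) hCX' (L - s) (by omega) v (fun p hp => ?_) hFv
    · have h1 := hEsupp x y h
      have h2 := hρle x
      have h3 := hρle y
      show L - rkX m n k x = L - rkX m n k y + 1
      omega
    · have h1 : rkX m n k p = s := (Finset.mem_filter.mp (hv p hp)).2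
      show L - rkX m n k p = L - s
      omega
  -- glue matchings into U and D
  set fup : ℕ → (YoungL m n × Fin k) → (YoungL m n × Fin k) :=
    fun s => if h : 2*s < L then (hup s h).choose else id with hfupdef
  set fdn : ℕ → (YoungL m n × Fin k) → (YoungL m n × Fin k) :=
    fun s => if h : L < 2*s then (hdn s h).choose else id with hfdndef
  set U : (YoungL m n × Fin k) → (YoungL m n × Fin k) :=
    fun p => if rkX m n k p < c then fup (rkX m n k p) p else p with hUdef
  set D : (YoungL m n × Fin k) → (YoungL m n × Fin k) :=
    fun p => if c < rkX m n k p then fdn (rkX m n k p) p else p with hDdef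
  have hcc1 : ∀ s, s < c → 2*s < L := by intro s hs; omega
  have hcc2 : ∀ s, c < s → L < 2*s := by intro s hs; omega
  have hU1 : ∀ p, rkX m n k p < c → rkX m n k (U p) = rkX m n k p + 1 ∧ p ≤ U p := by
    intro p hp
    have h2 : 2 * rkX m n k p < L := hcc1 _ hp
    have hspec := (hup (rkX m n k p) h2).choose_spec
    have hmem : p ∈ Finset.univ.filter (fun q => rkX m n k q = rkX m n k p) :=
      Finset.mem_filter.mpr ⟨Finset.mem_univ _, rfl⟩
    have hne := hspec.2 p hmem
    have hEU : U p = (hup (rkX m n k p) h2).choose p := by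
      simp only [hUdef, if_pos hp, hfupdef, dif_pos h2]
    rw [hEU]
    exact ⟨(EX_apply_ne hne).1, (EX_apply_ne hne).2⟩
  have hU2 : ∀ p, ¬ rkX m n k p < c → U p = p := by
    intro p hp
    simp only [hUdef, if_neg hp]
  have hU3 : ∀ p q, rkX m n k p = rkX m n k q → U p = U q → p = q := by
    intro p q hr he
    by_cases hp : rkX m n k p < c
    · have hq : rkX m n k q < c := by omega
      have h2 : 2 * rkX m n k p < L := hcc1 _ hp
      have hspec := (hup (rkX m n k p) h2).choose_spec
      simp only [hUdef, if_pos hp, if_pos hq, hfupdef] at he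
      rw [← hr] at he
      rw [dif_pos h2] at he
      refine hspec.1 ?_ ?_ he
      · exact Finset.mem_coe.mpr (Finset.mem_filter.mpr ⟨Finset.mem_univ _, rfl⟩)
      · exact Finset.mem_coe.mpr (Finset.mem_filter.mpr ⟨Finset.mem_univ _, hr.symm⟩)
    · have hq : ¬ rkX m n k q < c := by omega
      simp only [hUdef, if_neg hp, if_neg hq] at he
      exact he
  have hD1 : ∀ p, c < rkX m n k p → rkX m n k (D p) + 1 = rkX m n k p ∧ D p ≤ p := by
    intro p hp
    have h2 : L < 2 * rkX m n k p := hcc2 _ hp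
    have hspec := (hdn (rkX m n k p) h2).choose_spec
    have hmem : p ∈ Finset.univ.filter (fun q => rkX m n k q = rkX m n k p) :=
      Finset.mem_filter.mpr ⟨Finset.mem_univ _, rfl⟩
    have hne := hspec.2 p hmem
    have hDU : D p = (hdn (rkX m n k p) h2).choose p := by
      simp only [hDdef, if_pos hp, hfdndef, dif_pos h2]
    rw [hDU]
    exact ⟨((FX_apply_ne hne).1).symm, (FX_apply_ne hne).2⟩
  have hD2 : ∀ p, ¬ c < rkX m n k p → D p = p := by
    intro p hp
    simp only [hDdef, if_neg hp]
  have hD3 : ∀ p q, rkX m n k p = rkX m n k q → D p = D q → p = q := by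
    intro p q hr he
    by_cases hp : c < rkX m n k p
    · have hq : c < rkX m n k q := by omega
      have h2 : L < 2 * rkX m n k p := hcc2 _ hp
      have hspec := (hdn (rkX m n k p) h2).choose_spec
      simp only [hDdef, if_pos hp, if_pos hq, hfdndef] at he
      rw [← hr] at he
      rw [dif_pos h2] at he
      refine hspec.1 ?_ ?_ he
      · exact Finset.mem_coe.mpr (Finset.mem_filter.mpr ⟨Finset.mem_univ _, rfl⟩)
      · exact Finset.mem_coe.mpr (Finset.mem_filter.mpr ⟨Finset.mem_univ _, hr.symm⟩)
    · have hq : ¬ c < rkX m n k q := by omega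
      simp only [hDdef, if_neg hp, if_neg hq] at he
      exact he
  have hbound := chain_bound (rkX m n k) c U D hU1 hU2 hU3 hD1 hD2 hD3 A' hA'anti
  -- counting
  set S0 : Finset ℕ := (Finset.range (m*n+1)).filter (fun s => s ≤ c ∧ c ≤ s + (k-1)) with hS0def
  have hcount : (Finset.univ.filter (fun p : YoungL m n × Fin k => rkX m n k p = c)).card
      = ∑ s ∈ S0, youngRankNum m n s := by
    have hLHS : (Finset.univ.filter (fun p : YoungL m n × Fin k => rkX m n k p = c)).card
        = ∑ y : YoungL m n, ∑ j : Fin k, (if rkX m n k (y, j) = c then 1 else 0) := by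
      rw [Finset.card_filter, Fintype.sum_prod_type]
    have hRHS : ∑ s ∈ S0, youngRankNum m n s
        = ∑ y : YoungL m n, ∑ s ∈ S0, (if (∑ i, ((y.1 i : ℕ))) = s then 1 else 0) := by
      unfold youngRankNum
      simp only [Finset.card_filter]
      exact Finset.sum_comm
    rw [hLHS, hRHS]
    refine Finset.sum_congr rfl (fun y _ => ?_)
    rw [Finset.sum_ite_eq]
    have hyle : (∑ i, ((y.1 i : ℕ))) ≤ m*n := yrank_le y
    by_cases hy : (∑ i, ((y.1 i : ℕ))) ≤ c ∧ c ≤ (∑ i, ((y.1 i : ℕ))) + (k-1)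
    · rw [if_pos (show (∑ i, ((y.1 i : ℕ))) ∈ S0 from
        Finset.mem_filter.mpr ⟨Finset.mem_range.mpr (by omega), hy⟩)]
      have hj : c - (∑ i, ((y.1 i : ℕ))) < k := by omega
      rw [Finset.sum_eq_single (⟨c - (∑ i, ((y.1 i : ℕ))), hj⟩ : Fin k)]
      · rw [if_pos]
        unfold rkX yval
        simp only
        omega
      · intro b _ hb
        rw [if_neg]
        intro hcon
        apply hb
        unfold rkX yval at hcon
        simp only at hcon
        refine Fin.ext ?_
        simp only
        omega
      · intro h; exact absurd (Finset.mem_univ _) h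
    · rw [if_neg (show ¬ (∑ i, ((y.1 i : ℕ))) ∈ S0 from
        fun hmem => hy (Finset.mem_filter.mp hmem).2)]
      refine Finset.sum_eq_zero (fun j _ => ?_)
      rw [if_neg]
      intro hcon
      apply hy
      unfold rkX yval at hcon
      simp only at hcon
      have := j.isLt
      omega
  have hS0card : S0.card ≤ k := by
    have hsub : S0 ⊆ Finset.Icc (c - (k-1)) c := by
      intro s hs
      rw [Finset.mem_Icc]
      have := (Finset.mem_filter.mp hs).2
      omega
    have hcard := Finset.card_le_card hsub
    rw [Nat.card_Icc] at hcard
    omega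
  have hmemS0 : S0 ∈ ((Finset.range (m * n + 1)).powerset.filter fun S => S.card ≤ k) :=
    Finset.mem_filter.mpr ⟨Finset.mem_powerset.mpr (Finset.filter_subset _ _), hS0card⟩
  have hsup := Finset.le_sup (f := fun S => ∑ s ∈ S, youngRankNum m n s) hmemS0
  calc A.card = A'.card := hA'card.symm
    _ ≤ (Finset.univ.filter (fun p : YoungL m n × Fin k => rkX m n k p = c)).card := hbound
    _ = ∑ s ∈ S0, youngRankNum m n s := hcount
    _ ≤ _ := hsup
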